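/- Every equivalence class in the coend ∫^{n ∈ S} X^n × A(n), for A : S → Set, contains a minimal representative (x⃗, a) with x⃗ injective, and any two minimal representatives of the same class differ by a bijection: if (x⃗, a) and (x⃗', a') are both minimal and equivalent, there is a bijection σ with x⃗' ∘ σ = x⃗ and A(σ)(a') = a. -/

import Mathlib

/-- A functor from the skeleton `S` of finite sets and surjections to `Set`:
a family of sets with a functorial action of surjections. -/
structure SFunctor where
  obj : ℕ → Type
  map : ∀ {n m : ℕ} (f : Fin n → Fin m), Function.Surjective f → obj n → obj m
  map_id : ∀ {n : ℕ} (a : obj n), map id Function.surjective_id a = a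
  map_map : ∀ {n m k : ℕ} (f : Fin n → Fin m) (hf : Function.Surjective f)
      (g : Fin m → Fin k) (hg : Function.Surjective g) (a : obj n),
      map g hg (map f hf a) = map (g ∘ f) (hg.comp hf) a

/-- The relation identifying `(x⃗ ∘ σ, a)` with `(x⃗, σ · a)` for bijections `σ`,
on pairs of an injection `Fin n → X` and an element of `A(n)`. -/
def HatRel (A : SFunctor) (X : Type) :
    (Σ n : ℕ, {x : Fin n → X // Function.Injective x} × A.obj n) →
    (Σ n : ℕ, {x : Fin n → X // Function.Injective x} × A.obj n) → Prop :=
  fun p q => ∃ e : Fin p.1 ≃ Fin q.1,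
    (∀ i, q.2.1.1 (e i) = p.2.1.1 i) ∧ A.map e e.surjective p.2.2 = q.2.2

/-- `Â(X) = Σ_n [X over n] ⊗_{S_n} A(n)`. -/
def HatA (A : SFunctor) (X : Type) : Type := Quot (HatRel A X)

/-- The class `[x⃗, a]` in `Â(X)`. -/
def hatMk (A : SFunctor) {X : Type} {n : ℕ} (x : Fin n → X) (hx : Function.Injective x)
    (a : A.obj n) : HatA A X :=
  Quot.mk _ ⟨n, ⟨x, hx⟩, a⟩

/-- The characterizing property of the action of `Â` on functions:
`Â(f)([x⃗,a]) = [y⃗, A(α)(a)]` whenever `f ∘ x⃗ = y⃗ ∘ α` is an epi-mono factorization. -/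
def HatMapSpec (A : SFunctor)
    (F : ∀ (X Y : Type), (X → Y) → HatA A X → HatA A Y) : Prop :=
  ∀ (X Y : Type) (f : X → Y) (n m : ℕ) (x : Fin n → X) (hx : Function.Injective x)
    (a : A.obj n) (α : Fin n → Fin m) (hα : Function.Surjective α)
    (y : Fin m → Y) (hy : Function.Injective y),
    (∀ i, f (x i) = y (α i)) →
    F X Y f (hatMk A x hx a) = hatMk A y hy (A.map α hα a)

/-- A commutative square of sets which is a pullback (elementwise formulation). -/
def IsSetPullback {P A B C : Type} (pa : P → A) (pb : P → B) (f : A → C) (g : B → C) : Prop :=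
  (∀ p, f (pa p) = g (pb p)) ∧ ∀ a b, f a = g b → ∃! p, pa p = a ∧ pb p = b

/-- A commutative square of sets which is a weak pullback (elementwise formulation). -/
def IsWeakSetPullback {P A B C : Type} (pa : P → A) (pb : P → B) (f : A → C) (g : B → C) : Prop :=
  (∀ p, f (pa p) = g (pb p)) ∧ ∀ a b, f a = g b → ∃ p, pa p = a ∧ pb p = b

/-- Naturality of a family `τ n : A(n) → B(n)` with respect to surjections. -/
def SNatTrans (A B : SFunctor) (τ : ∀ n, A.obj n → B.obj n) : Prop :=
  ∀ (n m : ℕ) (f : Fin n → Fin m) (hf : Function.Surjective f) (a : A.obj n),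
    τ m (A.map f hf a) = B.map f hf (τ n a)

/-- The characterizing property of `τ̂ : Â → B̂`, namely `τ̂_X([x⃗,a]) = [x⃗, τ(a)]`. -/
def HatTransSpec (A B : SFunctor) (τ : ∀ n, A.obj n → B.obj n)
    (t : ∀ X : Type, HatA A X → HatA B X) : Prop :=
  ∀ (X : Type) (n : ℕ) (x : Fin n → X) (hx : Function.Injective x) (a : A.obj n),
    t X (hatMk A x hx a) = hatMk B x hx (τ n a)

/-- The relation `(y⃗ ∘ φ, a) ∼ (y⃗, φ·a)` for surjections `φ`, generating the coend
`∫^{n∈S} X^n × A(n)`. -/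
def CoendRel (A : SFunctor) (X : Type) :
    (Σ n : ℕ, (Fin n → X) × A.obj n) → (Σ n : ℕ, (Fin n → X) × A.obj n) → Prop :=
  fun p q => ∃ (φ : Fin p.1 → Fin q.1) (hφ : Function.Surjective φ),
    (∀ i, p.2.1 i = q.2.1 (φ i)) ∧ A.map φ hφ p.2.2 = q.2.2

/-- The coend `∫^{n∈S} X^n × A(n)`, i.e. the value of the left Kan extension of `A`
along the inclusion `S → Set` at `X`. -/
def Coend (A : SFunctor) (X : Type) : Type := Quot (CoendRel A X)

/-- The class of `(x⃗, a)` in the coend. -/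
def coendMk (A : SFunctor) {X : Type} {n : ℕ} (x : Fin n → X) (a : A.obj n) : Coend A X :=
  Quot.mk _ ⟨n, x, a⟩

/-- The functorial action of the left Kan extension: `(x⃗, a) ↦ (f ∘ x⃗, a)`. -/
def coendMap (A : SFunctor) {X Y : Type} (f : X → Y) : Coend A X → Coend A Y :=
  Quot.lift (fun p => coendMk A (fun i => f (p.2.1 i)) p.2.2)
    (by
      rintro ⟨n, x, a⟩ ⟨m, y, b⟩ ⟨φ, hφ, h1, h2⟩
      exact Quot.sound ⟨φ, hφ, fun i => by exact congrArg f (h1 i), h2⟩)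

section CoendAux

variable (A : SFunctor) (X : Type)

private lemma SFunctor.map_congr {n m : ℕ} {f g : Fin n → Fin m}
    (hf : Function.Surjective f) (hg : Function.Surjective g) (h : f = g) (a : A.obj n) :
    A.map f hf a = A.map g hg a := by subst h; rfl

/-- Bijection relation on representatives. -/
private def MRel : (Σ n : ℕ, (Fin n → X) × A.obj n) → (Σ n : ℕ, (Fin n → X) × A.obj n) → Prop :=
  fun p q => ∃ e : Fin p.1 ≃ Fin q.1,
    (∀ i, q.2.1 (e i) = p.2.1 i) ∧ A.map e e.surjective p.2.2 = q.2.2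

private lemma mrel_equiv : Equivalence (MRel A X) := by
  constructor
  · rintro ⟨n, x, a⟩
    exact ⟨Equiv.refl _, fun i => rfl, by
      have := A.map_id a
      exact (SFunctor.map_congr A (Equiv.refl (Fin n)).surjective Function.surjective_id rfl a).trans this⟩
  · rintro ⟨n, x, a⟩ ⟨m, y, b⟩ ⟨e, h1, h2⟩
    refine ⟨e.symm, fun i => ?_, ?_⟩
    · have := h1 (e.symm i); simpa using this.symm
    · rw [← h2, A.map_map]
      have : (⇑e.symm ∘ ⇑e) = id := by funext i; simp
      rw [SFunctor.map_congr A _ Function.surjective_id this a, A.map_id]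
  · rintro ⟨n, x, a⟩ ⟨m, y, b⟩ ⟨k, z, c⟩ ⟨e, h1, h2⟩ ⟨f, g1, g2⟩
    refine ⟨e.trans f, fun i => ((g1 (e i)).trans (h1 i) : _), ?_⟩
    rw [← g2, ← h2, A.map_map]
    exact SFunctor.map_congr A _ _ rfl a

/-- Rank: size of the image. -/
private noncomputable def rk {n : ℕ} (x : Fin n → X) : ℕ :=
  (Set.finite_range x).toFinset.card

private noncomputable def rEquiv {n : ℕ} (x : Fin n → X) :
    Fin (rk X x) ≃ (Set.finite_range x).toFinset :=
  ((Set.finite_range x).toFinset.equivFin).symm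

/-- Minimal tuple. -/
private noncomputable def minX {n : ℕ} (x : Fin n → X) : Fin (rk X x) → X :=
  fun i => (rEquiv X x i).val

private lemma minX_inj {n : ℕ} (x : Fin n → X) : Function.Injective (minX X x) :=
  fun i j h => (rEquiv X x).injective (Subtype.ext h)

/-- The surjection in the epi-mono factorization. -/
private noncomputable def minPhi {n : ℕ} (x : Fin n → X) : Fin n → Fin (rk X x) :=
  fun i => (rEquiv X x).symm ⟨x i, by simp [Set.Finite.mem_toFinset]⟩

private lemma minPhi_surj {n : ℕ} (x : Fin n → X) : Function.Surjective (minPhi X x) := by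
  intro j
  have hmem := (rEquiv X x j).2
  rw [Set.Finite.mem_toFinset] at hmem
  obtain ⟨i, hi⟩ := hmem
  refine ⟨i, ?_⟩
  unfold minPhi
  have : (⟨x i, by simp [Set.Finite.mem_toFinset]⟩ : (Set.finite_range x).toFinset)
      = rEquiv X x j := Subtype.ext hi
  rw [this, Equiv.symm_apply_apply]

private lemma minX_phi {n : ℕ} (x : Fin n → X) (i : Fin n) : minX X x (minPhi X x i) = x i := by
  unfold minX minPhi
  rw [Equiv.apply_symm_apply]

/-- Minimal representative. -/
private noncomputable def minRep (p : Σ n : ℕ, (Fin n → X) × A.obj n) :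
    Σ n : ℕ, (Fin n → X) × A.obj n :=
  ⟨rk X p.2.1, minX X p.2.1, A.map (minPhi X p.2.1) (minPhi_surj X p.2.1) p.2.2⟩

private lemma coendRel_minRep (p : Σ n : ℕ, (Fin n → X) × A.obj n) :
    CoendRel A X p (minRep A X p) :=
  ⟨minPhi X p.2.1, minPhi_surj X p.2.1, fun i => (minX_phi X p.2.1 i).symm, rfl⟩

private lemma mrel_minRep_of_inj (p : Σ n : ℕ, (Fin n → X) × A.obj n)
    (hp : Function.Injective p.2.1) : MRel A X p (minRep A X p) := by
  have hinj : Function.Injective (minPhi X p.2.1) := by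
    intro i j h
    apply hp
    rw [← minX_phi X p.2.1 i, ← minX_phi X p.2.1 j, h]
  refine ⟨Equiv.ofBijective _ ⟨hinj, minPhi_surj X p.2.1⟩, fun i => minX_phi X p.2.1 _, ?_⟩
  exact SFunctor.map_congr A _ _ rfl p.2.2

private lemma range_eq_of_coendRel {p q : Σ n : ℕ, (Fin n → X) × A.obj n}
    (h : CoendRel A X p q) : Set.range p.2.1 = Set.range q.2.1 := by
  obtain ⟨φ, hφ, h1, h2⟩ := h
  ext v
  constructor
  · rintro ⟨i, rfl⟩; exact ⟨φ i, (h1 i).symm⟩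
  · rintro ⟨j, rfl⟩; obtain ⟨i, rfl⟩ := hφ j; exact ⟨i, h1 i⟩

private lemma mrel_min_of_coendRel {p q : Σ n : ℕ, (Fin n → X) × A.obj n}
    (h : CoendRel A X p q) : MRel A X (minRep A X p) (minRep A X q) := by
  have hr := range_eq_of_coendRel A X h
  obtain ⟨φ, hφ, h1, h2⟩ := h
  have hmem : ∀ v : X, v ∈ (Set.finite_range p.2.1).toFinset ↔
      v ∈ (Set.finite_range q.2.1).toFinset := by
    intro v; rw [Set.Finite.mem_toFinset, Set.Finite.mem_toFinset, hr]
  dsimp only [minRep]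
  refine ⟨(rEquiv X p.2.1).trans ((Equiv.subtypeEquivRight hmem).trans (rEquiv X q.2.1).symm),
      fun i => ?_, ?_⟩
  · show minX X q.2.1 _ = minX X p.2.1 i
    unfold minX
    simp only [Equiv.trans_apply, Equiv.subtypeEquivRight_apply]
    exact congrArg Subtype.val (Equiv.apply_symm_apply _ _)
  · show A.map _ _ (A.map (minPhi X p.2.1) _ p.2.2) = A.map (minPhi X q.2.1) _ q.2.2
    rw [A.map_map, ← h2, A.map_map]
    apply SFunctor.map_congr
    funext i
    show (rEquiv X q.2.1).symm _ = minPhi X q.2.1 (φ i)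
    unfold minPhi
    congr 1
    apply Subtype.ext
    show ((Equiv.subtypeEquivRight hmem) (rEquiv X p.2.1 (minPhi X p.2.1 i))).val = q.2.1 (φ i)
    rw [Equiv.subtypeEquivRight_apply]
    show minX X p.2.1 (minPhi X p.2.1 i) = q.2.1 (φ i)
    rw [minX_phi, h1 i]

private lemma mrel_of_quot_eq {p q : Σ n : ℕ, (Fin n → X) × A.obj n}
    (h : Quot.mk (CoendRel A X) p = Quot.mk (CoendRel A X) q) :
    MRel A X (minRep A X p) (minRep A X q) := by
  have : Quot.mk (MRel A X) (minRep A X p) = Quot.mk (MRel A X) (minRep A X q) := by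
    have := congrArg (Quot.lift (fun r => Quot.mk (MRel A X) (minRep A X r))
      (fun a b hab => Quot.sound (mrel_min_of_coendRel A X hab))) h
    simpa using this
  exact ((mrel_equiv A X).eqvGen_iff).mp (Quot.eqvGen_exact this)

end CoendAux

/-- Every class in the coend `∫^{n∈S} X^n × A(n)` has a minimal
(injective) representative, and any two minimal representatives of the same class
differ by a bijection acting simultaneously on the tuple and the coefficient. -/
theorem coend_minimal_representatives (A : SFunctor) (X : Type) :
    (∀ p : Σ n : ℕ, (Fin n → X) × A.obj n,
      ∃ q : Σ n : ℕ, (Fin n → X) × A.obj n,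
        Function.Injective q.2.1 ∧
        Quot.mk (CoendRel A X) p = Quot.mk (CoendRel A X) q) ∧
    (∀ p q : Σ n : ℕ, (Fin n → X) × A.obj n,
      Function.Injective p.2.1 → Function.Injective q.2.1 →
      Quot.mk (CoendRel A X) p = Quot.mk (CoendRel A X) q →
      ∃ e : Fin p.1 ≃ Fin q.1,
        (∀ i, q.2.1 (e i) = p.2.1 i) ∧
        A.map e.symm e.symm.surjective q.2.2 = p.2.2) := by
  constructor
  · intro p
    exact ⟨minRep A X p, minX_inj X p.2.1, Quot.sound (coendRel_minRep A X p)⟩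
  · intro p q hp hq h
    have h1 := mrel_minRep_of_inj A X p hp
    have h2 := mrel_minRep_of_inj A X q hq
    have h3 := mrel_of_quot_eq A X h
    have hpq : MRel A X p q :=
      (mrel_equiv A X).trans h1 ((mrel_equiv A X).trans h3 ((mrel_equiv A X).symm h2))
    obtain ⟨e, he1, he2⟩ := hpq
    refine ⟨e, he1, ?_⟩
    rw [← he2, A.map_map]
    have : (⇑e.symm ∘ ⇑e) = id := by funext i; simp
    rw [SFunctor.map_congr A _ Function.surjective_id this p.2.2, A.map_id]
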